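/- arXiv:1205.1074 — 4 statements merged into one kernel-verified Lean document; each statement's English description precedes it below -/
import Mathlib

section
/- If λ is a Salem number of degree s and k is a positive natural number, then λ^k is a Salem number of degree s, and the set of Galois conjugates of λ^k is precisely the set of k-th powers of the Galois conjugates of λ. -/
/-- A Salem number: a real algebraic integer `l > 1` whose minimal polynomial over ℚ
is reciprocal and has exactly two roots of absolute value different from 1. -/
def IsSalemNumber (l : ℝ) : Prop :=
  1 < l ∧ IsIntegral ℤ l ∧ (minpoly ℚ l).reverse = minpoly ℚ l ∧
    (((minpoly ℚ l).aroots ℂ).filter (fun z => ‖z‖ ≠ 1)).card = 2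

open Polynomial IntermediateField

attribute [local instance high] IntermediateField.algebra'

lemma aux_root_inv {K : Type*} [Field K] [Algebra ℚ K] {p : ℚ[X]} (hp : p.reverse = p)
    {z : K} (hz : z ≠ 0) (h : Polynomial.aeval z p = 0) : Polynomial.aeval z⁻¹ p = 0 := by
  letI := invertibleOfNonzero hz
  rw [aeval_def, ← invOf_eq_inv z, ← hp]
  exact (Polynomial.eval₂_reverse_eq_zero_iff _ z p).mpr (by rwa [aeval_def] at h)

lemma aux_card_two {α : Type*} {T : Multiset α} {a b : α} (h : Multiset.card T = 2)
    (ha : a ∈ T) (hb : b ∈ T) (hab : a ≠ b) : T = {a, b} := by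
  obtain ⟨T', rfl⟩ := Multiset.exists_cons_of_mem ha
  rcases Multiset.mem_cons.mp hb with h' | h'
  · exact absurd h'.symm hab
  obtain ⟨T'', rfl⟩ := Multiset.exists_cons_of_mem h'
  have : Multiset.card T'' = 0 := by simpa using h
  rw [Multiset.card_eq_zero] at this
  simp [this]

set_option maxHeartbeats 1000000 in
theorem salem_power (l : ℝ) (s : ℕ) (hl : IsSalemNumber l)
    (hs : (minpoly ℚ l).natDegree = s) (k : ℕ) (hk : 0 < k) :
    IsSalemNumber (l ^ k) ∧ (minpoly ℚ (l ^ k)).natDegree = s ∧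
      {z : ℂ | Polynomial.aeval z (minpoly ℚ (l ^ k)) = 0} =
        (fun z : ℂ => z ^ k) '' {z : ℂ | Polynomial.aeval z (minpoly ℚ l) = 0} := by
  obtain ⟨hl1, hint, hrev, hcard⟩ := hl
  have hl0 : (0:ℝ) < l := lt_trans one_pos hl1
  have hlne : l ≠ 0 := ne_of_gt hl0
  have hlk1 : 1 < l ^ k := one_lt_pow₀ hl1 hk.ne'
  have hlkne : l ^ k ≠ 0 := pow_ne_zero k hlne
  have hlinv1 : l⁻¹ < 1 := by
    rw [inv_lt_one_iff₀]; right; exact hl1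
  have hlkinv1 : (l ^ k)⁻¹ < 1 := by
    rw [inv_lt_one_iff₀]; right; exact hlk1
  have hQl : IsIntegral ℚ l := hint.tower_top
  have hQlk : IsIntegral ℚ (l ^ k) := hQl.pow k
  set S : ℚ[X] := minpoly ℚ l with hSdef
  set P : ℚ[X] := minpoly ℚ (l ^ k) with hPdef
  have hS0 : S ≠ 0 := minpoly.ne_zero hQl
  have hP0 : P ≠ 0 := minpoly.ne_zero hQlk
  have hSsep : S.Separable := (minpoly.irreducible hQl).separable
  have hPsep : P.Separable := (minpoly.irreducible hQlk).separable
  -- evaluation over ℂ of a real point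
  have hmapRC : ∀ (x : ℝ) (p : ℚ[X]),
      Polynomial.aeval (x : ℂ) p = algebraMap ℝ ℂ (Polynomial.aeval x p) := by
    intro x p
    exact Polynomial.aeval_algHom_apply (IsScalarTower.toAlgHom ℚ ℝ ℂ) x p
  have hlinv_root : Polynomial.aeval l⁻¹ S = 0 := aux_root_inv hrev hlne (minpoly.aeval ℚ l)
  have hrootlC : Polynomial.aeval ((l:ℝ) : ℂ) S = 0 := by
    rw [hmapRC]; rw [minpoly.aeval]; simp
  have hrootlinvC : Polynomial.aeval ((l⁻¹ : ℝ) : ℂ) S = 0 := by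
    rw [hmapRC, hlinv_root]; simp
  -- the two roots of S off the unit circle are exactly l and l⁻¹
  have key2 : ∀ z : ℂ, Polynomial.aeval z S = 0 → ‖z‖ ≠ 1 →
      z = ((l:ℝ) : ℂ) ∨ z = ((l⁻¹:ℝ) : ℂ) := by
    have habl : ‖((l:ℝ):ℂ)‖ = l := by
      rw [Complex.norm_real, Real.norm_eq_abs, abs_of_pos hl0]
    have habli : ‖((l⁻¹:ℝ):ℂ)‖ = l⁻¹ := by
      rw [Complex.norm_real, Real.norm_eq_abs, abs_of_pos (inv_pos.mpr hl0)]
    have hne : ((l:ℝ):ℂ) ≠ ((l⁻¹:ℝ):ℂ) := by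
      intro h
      have h1 : (l:ℝ) = l⁻¹ := by exact_mod_cast h
      linarith
    have hmema : ((l:ℝ):ℂ) ∈ (S.aroots ℂ).filter (fun z => ‖z‖ ≠ 1) := by
      rw [Multiset.mem_filter, mem_aroots]
      exact ⟨⟨hS0, hrootlC⟩, by rw [habl]; exact ne_of_gt hl1⟩
    have hmemb : ((l⁻¹:ℝ):ℂ) ∈ (S.aroots ℂ).filter (fun z => ‖z‖ ≠ 1) := by
      rw [Multiset.mem_filter, mem_aroots]
      refine ⟨⟨hS0, hrootlinvC⟩, by rw [habli]; exact ne_of_lt hlinv1⟩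
    have hT := aux_card_two hcard hmema hmemb hne
    intro z hz habs
    have : z ∈ (S.aroots ℂ).filter (fun z => ‖z‖ ≠ 1) := by
      rw [Multiset.mem_filter, mem_aroots]; exact ⟨⟨hS0, hz⟩, habs⟩
    rw [hT] at this
    simpa using this
  -- the field ℚ(l^k) equals ℚ(l)
  set F : IntermediateField ℚ ℝ := ℚ⟮l ^ k⟯ with hFdef
  have hlkF : l ^ k ∈ F := mem_adjoin_simple_self ℚ (l ^ k)
  letI : Algebra F ℂ := ((algebraMap ℝ ℂ).comp (algebraMap F ℝ)).toAlgebra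
  haveI : IsScalarTower F ℝ ℂ := IsScalarTower.of_algebraMap_eq fun x => rfl
  haveI : IsScalarTower ℚ F ℂ := IsScalarTower.of_algebraMap_eq fun x => by
    show algebraMap ℚ ℂ x = (algebraMap ℝ ℂ) ((algebraMap F ℝ) (algebraMap ℚ F x))
    rw [← IsScalarTower.algebraMap_apply ℚ F ℝ, ← IsScalarTower.algebraMap_apply ℚ ℝ ℂ]
  have hFl : IsIntegral F l := hQl.tower_top
  set q : F[X] := minpoly F l with hqdef
  have hq0 : q ≠ 0 := minpoly.ne_zero hFl
  have hq_dvd_S : q ∣ S.map (algebraMap ℚ F) := minpoly.dvd_map_of_isScalarTower ℚ F l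
  have hq_dvd_pow : q ∣ (X ^ k - C (⟨l ^ k, hlkF⟩ : F)) := by
    apply minpoly.dvd
    simp only [map_sub, Polynomial.aeval_X_pow, Polynomial.aeval_C]
    rw [show (algebraMap F ℝ) (⟨l ^ k, hlkF⟩ : F) = l ^ k from rfl, sub_self]
  have hqsep : q.Separable := (hSsep.map (f := algebraMap ℚ F)).of_dvd hq_dvd_S
  have hqroots : ∀ μ ∈ q.aroots ℂ, μ = ((l:ℝ):ℂ) := by
    intro μ hμ
    rw [mem_aroots'] at hμ
    obtain ⟨_, hμ0⟩ := hμ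
    have h1 : Polynomial.aeval μ S = 0 := by
      obtain ⟨r, hr⟩ := hq_dvd_S
      have : Polynomial.aeval μ (S.map (algebraMap ℚ F)) = 0 := by
        rw [hr, map_mul, hμ0, zero_mul]
      rwa [aeval_def, eval₂_map, show (algebraMap F ℂ).comp (algebraMap ℚ F) = algebraMap ℚ ℂ from Subsingleton.elim _ _, ← aeval_def] at this
    have h2 : μ ^ k = ((l ^ k : ℝ) : ℂ) := by
      obtain ⟨r, hr⟩ := hq_dvd_pow
      have h3 : Polynomial.aeval μ (X ^ k - C (⟨l ^ k, hlkF⟩ : F)) = 0 := by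
        rw [hr, map_mul, hμ0, zero_mul]
      simp only [map_sub, Polynomial.aeval_X_pow, Polynomial.aeval_C] at h3
      have h4 : (algebraMap F ℂ) (⟨l ^ k, hlkF⟩ : F) = ((l ^ k : ℝ) : ℂ) := rfl
      rw [h4] at h3
      linear_combination h3
    have habsμ : ‖μ‖ ≠ 1 := by
      intro h
      have : ‖(μ ^ k)‖ = 1 := by rw [norm_pow, h, one_pow]
      rw [h2, Complex.norm_real, Real.norm_eq_abs, abs_of_pos (by positivity)] at this
      exact (ne_of_gt hlk1) this
    rcases key2 μ h1 habsμ with h | h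
    · exact h
    · exfalso
      rw [h] at h2
      have : ((l⁻¹:ℝ):ℂ) ^ k = ((l ^ k : ℝ):ℂ) := h2
      have h5 : (l⁻¹) ^ k = l ^ k := by exact_mod_cast this
      rw [inv_pow] at h5
      have h6 : (l ^ k) * (l ^ k) = 1 := by
        nth_rewrite 1 [← h5]; exact inv_mul_cancel₀ hlkne
      nlinarith [hlk1, h6]
  have hqdeg : q.natDegree = 1 := by
    have hsplit : Splits (q.map (algebraMap F ℂ)) := IsAlgClosed.splits _
    have hdeq : q.natDegree = Multiset.card (q.aroots ℂ) := by
      rw [aroots_def, ← natDegree_map (algebraMap F ℂ)]; exact hsplit.natDegree_eq_card_roots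
    have hnodup : (q.aroots ℂ).Nodup := Polynomial.nodup_roots (hqsep.map)
    have hsub : (q.aroots ℂ) ⊆ {((l:ℝ):ℂ)} := by
      intro x hx; rw [Multiset.mem_singleton]; exact hqroots x hx
    have hle : q.natDegree ≤ 1 := by
      rw [hdeq]
      have h9 := Multiset.card_le_card ((Multiset.le_iff_subset hnodup).mpr hsub)
      simpa using h9
    have hpos : 0 < q.natDegree := minpoly.natDegree_pos hFl
    omega
  have hlF : l ∈ F := by
    obtain ⟨y, hy⟩ := minpoly.natDegree_eq_one_iff.mp hqdeg
    exact hy ▸ y.2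
  have hFeq : F = ℚ⟮l⟯ := by
    apply le_antisymm
    · rw [hFdef, adjoin_le_iff]
      intro x hx
      rw [Set.mem_singleton_iff] at hx
      subst hx
      exact pow_mem (mem_adjoin_simple_self ℚ l) k
    · rw [adjoin_le_iff]
      intro x hx
      rw [Set.mem_singleton_iff] at hx
      subst hx
      exact hlF
  have hdegP : P.natDegree = s := by
    have h1 : Module.finrank ℚ F = P.natDegree := adjoin.finrank hQlk
    have h2 : Module.finrank ℚ ℚ⟮l⟯ = S.natDegree := adjoin.finrank hQl
    rw [← h1, hFeq, h2, hs]
  -- root set equality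
  have himage : {z : ℂ | Polynomial.aeval z P = 0} =
      (fun z : ℂ => z ^ k) '' {z : ℂ | Polynomial.aeval z S = 0} := by
    ext w
    simp only [Set.mem_setOf_eq, Set.mem_image]
    constructor
    · intro hw
      set pb := adjoin.powerBasis hQlk with hpb
      have hgenmin : minpoly ℚ pb.gen = P := by
        rw [hpb, adjoin.powerBasis_gen, minpoly_gen]
      have hw' : Polynomial.aeval w (minpoly ℚ pb.gen) = 0 := by rw [hgenmin]; exact hw
      set ψ := pb.lift w hw' with hψ
      refine ⟨ψ ⟨l, hlF⟩, ?_, ?_⟩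
      · have hminl : minpoly ℚ (⟨l, hlF⟩ : F) = S := by
          rw [← minpoly.algebraMap_eq (algebraMap F ℝ).injective (⟨l, hlF⟩ : F)]
          rfl
        rw [Polynomial.aeval_algHom_apply, ← hminl, minpoly.aeval, map_zero]
      · have hgen : (⟨l, hlF⟩ : F) ^ k = pb.gen := by
          rw [hpb, adjoin.powerBasis_gen]
          ext
          push_cast
          rfl
        rw [← map_pow, hgen, hψ, pb.lift_gen]
    · rintro ⟨y, hy, rfl⟩
      set pb := adjoin.powerBasis hQl with hpb
      have hgenmin : minpoly ℚ pb.gen = S := by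
        rw [hpb, adjoin.powerBasis_gen, minpoly_gen]
      have hy' : Polynomial.aeval y (minpoly ℚ pb.gen) = 0 := by rw [hgenmin]; exact hy
      set φ := pb.lift y hy' with hφ
      have hgoal : Polynomial.aeval (pb.gen ^ k) P = 0 := by
        have hmin : minpoly ℚ (pb.gen ^ k) = P := by
          rw [← minpoly.algebraMap_eq (algebraMap ℚ⟮l⟯ ℝ).injective (pb.gen ^ k), map_pow]
          rw [hpb, adjoin.powerBasis_gen, AdjoinSimple.algebraMap_gen]
        rw [← hmin]; exact minpoly.aeval ℚ _
      calc Polynomial.aeval (y ^ k) P = Polynomial.aeval (φ (pb.gen ^ k)) P := by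
            rw [map_pow, hφ, pb.lift_gen]
        _ = φ (Polynomial.aeval (pb.gen ^ k) P) := by rw [Polynomial.aeval_algHom_apply]
        _ = 0 := by rw [hgoal, map_zero]
  -- l^{-k} is a root of P over ℝ
  have hlkinv_root : Polynomial.aeval ((l ^ k)⁻¹ : ℝ) P = 0 := by
    have h1 : (((l⁻¹:ℝ)):ℂ) ∈ {z : ℂ | Polynomial.aeval z S = 0} := hrootlinvC
    have h2 : (((l⁻¹:ℝ)):ℂ) ^ k ∈ {z : ℂ | Polynomial.aeval z P = 0} := by
      rw [himage]; exact ⟨_, h1, rfl⟩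
    have h3 : Polynomial.aeval (((l ^ k)⁻¹ : ℝ) : ℂ) P = 0 := by
      have : (((l⁻¹:ℝ)):ℂ) ^ k = (((l ^ k)⁻¹ : ℝ) : ℂ) := by push_cast [inv_pow]; ring
      rwa [this] at h2
    rw [hmapRC] at h3
    exact (map_eq_zero_iff _ (algebraMap ℝ ℂ).injective).mp h3
  -- reciprocity of P
  have hrevP : P.reverse = P := by
    have hc0 : P.coeff 0 ≠ 0 := minpoly.coeff_zero_ne_zero hQlk hlkne
    have hrev_root : Polynomial.aeval (l ^ k) P.reverse = 0 := by
      letI := invertibleOfNonzero (inv_ne_zero hlkne)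
      have := (Polynomial.eval₂_reverse_eq_zero_iff (algebraMap ℚ ℝ) ((l ^ k)⁻¹) P).mpr
        (by rwa [aeval_def] at hlkinv_root)
      rwa [invOf_eq_inv, inv_inv, ← aeval_def] at this
    have hPmonic : P.Monic := minpoly.monic hQlk
    obtain ⟨r, hr⟩ := minpoly.dvd ℚ (l ^ k) hrev_root
    have hrevne : P.reverse ≠ 0 := fun h => hP0 (reverse_eq_zero.mp h)
    have hrne : r ≠ 0 := by rintro rfl; rw [mul_zero] at hr; exact hrevne hr
    have htr0 : P.natTrailingDegree = 0 := natTrailingDegree_eq_zero.mpr (Or.inr hc0)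
    have hrev_deg : P.reverse.natDegree = P.natDegree := by
      rw [reverse_natDegree, htr0]; omega
    have hrdeg : r.natDegree = 0 := by
      have h := natDegree_mul hP0 hrne
      rw [← hr, hrev_deg] at h
      omega
    obtain ⟨a, ha⟩ := natDegree_eq_zero.mp hrdeg
    rw [← ha] at hr
    have e1 : (1:ℚ) = P.coeff 0 * a := by
      have := congrArg (fun p : ℚ[X] => p.coeff 0) hr
      simpa [coeff_zero_reverse, hPmonic.leadingCoeff, coeff_mul_C] using this
    have e2 : P.coeff 0 = a := by
      have h3 : P.reverse.leadingCoeff = P.coeff 0 := by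
        rw [reverse_leadingCoeff, trailingCoeff, htr0]
      have h4 : (P * C a).leadingCoeff = a := by
        rcases eq_or_ne a 0 with rfl | ha0
        · simp
        · rw [leadingCoeff_mul, hPmonic.leadingCoeff, leadingCoeff_C, one_mul]
      rw [← h3, hr, h4]
    rw [e2] at e1
    rcases mul_self_eq_one_iff.mp e1.symm with ha1 | ha1
    · rw [hr, ha1, map_one, mul_one]
    · exfalso
      -- a = -1 forces 1 to be a root of P
      have heval1 : P.reverse.eval 1 = P.eval 1 := by
        letI : Invertible (1:ℚ) := invertibleOne
        have h5 := Polynomial.eval₂_reverse_mul_pow (RingHom.id ℚ) 1 P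
        simp only [invOf_one, one_pow, mul_one] at h5
        exact h5
      have hP1 : P.eval 1 = 0 := by
        have h5 : P.eval 1 = P.eval 1 * a := by
          conv_lhs => rw [← heval1, hr]
          rw [Polynomial.eval_mul, Polynomial.eval_C]
        rw [ha1] at h5
        linarith
      have hdvd1 : (X - C (1:ℚ)) ∣ P := dvd_iff_isRoot.mpr hP1
      have hassoc : Associated (X - C (1:ℚ)) P :=
        (irreducible_X_sub_C (1:ℚ)).associated_of_dvd (minpoly.irreducible hQlk) hdvd1
      have hPeq : P = X - C (1:ℚ) :=
        (eq_of_monic_of_associated (monic_X_sub_C 1) hPmonic hassoc).symm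
      have : Polynomial.aeval (l ^ k) P = l ^ k - 1 := by
        rw [hPeq]; simp
      rw [minpoly.aeval] at this
      nlinarith [hlk1]
  -- the filtered roots of P
  have habs_lk : ‖((l ^ k : ℝ):ℂ)‖ = l ^ k := by
    rw [Complex.norm_real, Real.norm_eq_abs, abs_of_pos (by positivity)]
  have habs_lki : ‖(((l ^ k)⁻¹ : ℝ):ℂ)‖ = (l ^ k)⁻¹ := by
    rw [Complex.norm_real, Real.norm_eq_abs, abs_of_pos (by positivity)]
  have hfilter : ((P.aroots ℂ).filter (fun z => ‖z‖ ≠ 1)) =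
      {((l ^ k : ℝ):ℂ), (((l ^ k)⁻¹ : ℝ):ℂ)} := by
    have hnodup : (P.aroots ℂ).Nodup := Polynomial.nodup_roots (hPsep.map)
    have hne : ((l ^ k : ℝ):ℂ) ≠ (((l ^ k)⁻¹ : ℝ):ℂ) := by
      intro h
      have h1 : (l ^ k : ℝ) = (l ^ k)⁻¹ := by exact_mod_cast h
      linarith
    have hmema : ((l ^ k : ℝ):ℂ) ∈ (P.aroots ℂ).filter (fun z => ‖z‖ ≠ 1) := by
      rw [Multiset.mem_filter, mem_aroots]
      refine ⟨⟨hP0, by rw [hmapRC, minpoly.aeval]; simp⟩, by rw [habs_lk]; exact ne_of_gt hlk1⟩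
    have hmemb : (((l ^ k)⁻¹ : ℝ):ℂ) ∈ (P.aroots ℂ).filter (fun z => ‖z‖ ≠ 1) := by
      rw [Multiset.mem_filter, mem_aroots]
      refine ⟨⟨hP0, by rw [hmapRC, hlkinv_root]; simp⟩,
        by rw [habs_lki]; exact ne_of_lt hlkinv1⟩
    have hsub : (P.aroots ℂ).filter (fun z => ‖z‖ ≠ 1) ⊆
        {((l ^ k : ℝ):ℂ), (((l ^ k)⁻¹ : ℝ):ℂ)} := by
      intro z hz
      rw [Multiset.mem_filter, mem_aroots] at hz
      obtain ⟨⟨_, hz0⟩, habs⟩ := hz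
      have : z ∈ {z : ℂ | Polynomial.aeval z P = 0} := hz0
      rw [himage] at this
      obtain ⟨y, hy, rfl⟩ := this
      have habsy : ‖y‖ ≠ 1 := by
        intro h; apply habs; rw [norm_pow, h, one_pow]
      rcases key2 y hy habsy with h | h
      · subst h
        rw [Multiset.insert_eq_cons, Multiset.mem_cons]
        left; push_cast; ring
      · subst h
        rw [Multiset.insert_eq_cons, Multiset.mem_cons]
        right; rw [Multiset.mem_singleton]; push_cast [inv_pow]; ring
    have hpairnodup : ({((l ^ k : ℝ):ℂ), (((l ^ k)⁻¹ : ℝ):ℂ)} : Multiset ℂ).Nodup := by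
      rw [Multiset.insert_eq_cons, Multiset.nodup_cons]
      exact ⟨by rw [Multiset.mem_singleton]; exact hne, Multiset.nodup_singleton _⟩
    have hpairsub : ({((l ^ k : ℝ):ℂ), (((l ^ k)⁻¹ : ℝ):ℂ)} : Multiset ℂ) ⊆
        (P.aroots ℂ).filter (fun z => ‖z‖ ≠ 1) := by
      intro z hz
      rw [Multiset.insert_eq_cons, Multiset.mem_cons, Multiset.mem_singleton] at hz
      rcases hz with rfl | rfl
      · exact hmema
      · exact hmemb
    exact le_antisymm ((Multiset.le_iff_subset (hnodup.filter _)).mpr hsub)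
      ((Multiset.le_iff_subset hpairnodup).mpr hpairsub)
  refine ⟨⟨hlk1, hint.pow k, hrevP, by rw [hfilter]; rfl⟩, hdegP, himage⟩
end

section
/- For λ > 1 a real number, the quantity (1/(λ+λ⁻¹))^m · Σ_{m/2 < j ≤ m} C(m,j) · λ^{m−2j} converges to 0 as m → ∞. -/
open Filter

theorem binomial_tail_tendsto_zero (l : ℝ) (hl : 1 < l) :
    Tendsto (fun m : ℕ =>
        (1 / (l + l⁻¹)) ^ m *
          ∑ j ∈ (Finset.range (m + 1)).filter (fun j => m < 2 * j),
            (Nat.choose m j : ℝ) * l ^ ((m : ℤ) - 2 * j))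
      atTop (nhds 0) := by
  have hl0 : (0 : ℝ) < l := lt_trans one_pos hl
  have hsum2 : (2 : ℝ) < l + l⁻¹ := by
    have h : (0:ℝ) < (l - 1) ^ 2 := by
      have : l - 1 ≠ 0 := by linarith
      positivity
    nlinarith [mul_inv_cancel₀ hl0.ne', inv_pos.mpr hl0]
  have hpos : (0 : ℝ) < l + l⁻¹ := lt_trans two_pos hsum2
  -- upper bound
  have hub : ∀ m : ℕ,
      (1 / (l + l⁻¹)) ^ m *
          ∑ j ∈ (Finset.range (m + 1)).filter (fun j => m < 2 * j),
            (Nat.choose m j : ℝ) * l ^ ((m : ℤ) - 2 * j)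
        ≤ l⁻¹ * (2 / (l + l⁻¹)) ^ m := by
    intro m
    have hsle : ∑ j ∈ (Finset.range (m + 1)).filter (fun j => m < 2 * j),
        (Nat.choose m j : ℝ) * l ^ ((m : ℤ) - 2 * j)
        ≤ l⁻¹ * 2 ^ m := by
      calc ∑ j ∈ (Finset.range (m + 1)).filter (fun j => m < 2 * j),
            (Nat.choose m j : ℝ) * l ^ ((m : ℤ) - 2 * j)
          ≤ ∑ j ∈ (Finset.range (m + 1)).filter (fun j => m < 2 * j),
            (Nat.choose m j : ℝ) * l⁻¹ := by
            apply Finset.sum_le_sum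
            intro j hj
            simp only [Finset.mem_filter, Finset.mem_range] at hj
            have hje : ((m : ℤ) - 2 * j) ≤ -1 := by
              have := hj.2
              omega
            have : l ^ ((m : ℤ) - 2 * j) ≤ l ^ (-1 : ℤ) :=
              zpow_le_zpow_right₀ hl.le hje
            rw [zpow_neg_one] at this
            exact mul_le_mul_of_nonneg_left this (Nat.cast_nonneg _)
        _ = l⁻¹ * ∑ j ∈ (Finset.range (m + 1)).filter (fun j => m < 2 * j),
            (Nat.choose m j : ℝ) := by rw [Finset.mul_sum]; simp [mul_comm]
        _ ≤ l⁻¹ * 2 ^ m := by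
            apply mul_le_mul_of_nonneg_left _ (by positivity)
            calc ∑ j ∈ (Finset.range (m + 1)).filter (fun j => m < 2 * j),
                  (Nat.choose m j : ℝ)
                ≤ ∑ j ∈ Finset.range (m + 1), (Nat.choose m j : ℝ) := by
                  apply Finset.sum_le_sum_of_subset_of_nonneg (Finset.filter_subset _ _)
                  intro i _ _; positivity
              _ = 2 ^ m := by
                  rw [← Nat.cast_sum, Nat.sum_range_choose]; push_cast; ring
    calc (1 / (l + l⁻¹)) ^ m *
          ∑ j ∈ (Finset.range (m + 1)).filter (fun j => m < 2 * j),
            (Nat.choose m j : ℝ) * l ^ ((m : ℤ) - 2 * j)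
        ≤ (1 / (l + l⁻¹)) ^ m * (l⁻¹ * 2 ^ m) :=
          mul_le_mul_of_nonneg_left hsle (by positivity)
      _ = l⁻¹ * (2 / (l + l⁻¹)) ^ m := by
          field_simp; ring
  have hlb : ∀ m : ℕ, (0 : ℝ) ≤
      (1 / (l + l⁻¹)) ^ m *
          ∑ j ∈ (Finset.range (m + 1)).filter (fun j => m < 2 * j),
            (Nat.choose m j : ℝ) * l ^ ((m : ℤ) - 2 * j) := by
    intro m
    apply mul_nonneg (by positivity)
    apply Finset.sum_nonneg
    intro j _
    positivity
  have hgeo : Tendsto (fun m : ℕ => l⁻¹ * (2 / (l + l⁻¹)) ^ m) atTop (nhds 0) := by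
    have h2 : |2 / (l + l⁻¹)| < 1 := by
      rw [abs_of_pos (by positivity)]
      rw [div_lt_one hpos]
      exact hsum2
    have := tendsto_pow_atTop_nhds_zero_of_abs_lt_one h2
    have := this.const_mul l⁻¹
    simpa using this
  exact squeeze_zero hlb hub hgeo
end

section
/- Let V be a finite-dimensional real vector space with a symmetric bilinear form of signature (1, m−1), and fix w ∈ V with w² > 0. For any integer K < 0, the set {v ∈ V : v² = K and 0 ≤ v·w ≤ 1} is compact. -/
lemma bilin_sum {V : Type*} [AddCommGroup V] [Module ℝ V] {m : ℕ}
    (B : LinearMap.BilinForm ℝ V) (b : Module.Basis (Fin m) ℝ V)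
    (horth : ∀ i j, i ≠ j → B (b i) (b j) = 0) (u v : V) :
    B u v = ∑ i, b.repr u i * b.repr v i * B (b i) (b i) := by
  nth_rewrite 1 [← b.sum_repr u, ← b.sum_repr v]
  simp only [map_sum, map_smul, LinearMap.sum_apply, LinearMap.smul_apply, smul_eq_mul]
  refine Finset.sum_congr rfl fun i _ => ?_
  rw [Finset.sum_eq_single i]
  · ring
  · intro j _ hj; rw [horth j i hj]; ring
  · intro h; exact absurd (Finset.mem_univ i) h

set_option maxHeartbeats 1000000 in
lemma negdef_orth {V : Type*} [AddCommGroup V] [Module ℝ V] {m : ℕ} (hm : 0 < m)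
    (B : LinearMap.BilinForm ℝ V) (b : Module.Basis (Fin m) ℝ V)
    (horth : ∀ i j, i ≠ j → B (b i) (b j) = 0)
    (hpos : ∀ i : Fin m, (i : ℕ) = 0 → 0 < B (b i) (b i))
    (hneg : ∀ i : Fin m, (i : ℕ) ≠ 0 → B (b i) (b i) < 0)
    (w : V) (hw : 0 < B w w) (u : V) (huw : B u w = 0) :
    B u u ≤ 0 ∧ (B u u = 0 → u = 0) := by
  obtain ⟨i0, s, x, y, a, hi0v, hsdef, hxd, hyd, had⟩ :
      ∃ (i0 : Fin m) (s : Finset (Fin m)) (x y a : Fin m → ℝ),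
        (i0 : ℕ) = 0 ∧ s = Finset.univ.erase i0 ∧ x = (fun i => b.repr u i) ∧
        y = (fun i => b.repr w i) ∧ a = (fun i => B (b i) (b i)) :=
    ⟨⟨0, hm⟩, _, _, _, _, rfl, rfl, rfl, rfl, rfl⟩
  have ha0 : 0 < a i0 := by rw [had]; exact hpos i0 hi0v
  have hneg' : ∀ i ∈ s, a i < 0 := by
    intro i hi
    rw [had]
    refine hneg i fun h => ?_
    rw [hsdef, Finset.mem_erase] at hi
    exact hi.1 (Fin.ext (h.trans hi0v.symm))
  have hsum : ∀ (p : V) (xp : Fin m → ℝ) (q : V) (xq : Fin m → ℝ),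
      (xp = fun i => b.repr p i) → (xq = fun i => b.repr q i) →
      B p q = xp i0 * xq i0 * a i0 + ∑ i ∈ s, xp i * xq i * a i := by
    intro p xp q xq hp hq
    subst hp hq had hsdef
    rw [bilin_sum B b horth, ← Finset.add_sum_erase _ _ (Finset.mem_univ i0)]
  have hBuu : B u u = x i0 * x i0 * a i0 + ∑ i ∈ s, x i * x i * a i := hsum u x u x hxd hxd
  have hBww : B w w = y i0 * y i0 * a i0 + ∑ i ∈ s, y i * y i * a i := hsum w y w y hyd hyd
  have hBuw : x i0 * y i0 * a i0 + ∑ i ∈ s, x i * y i * a i = 0 := by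
    rw [← hsum u x w y hxd hyd]; exact huw
  -- Q notation
  have hQx : (0:ℝ) ≤ ∑ i ∈ s, -(x i * x i * a i) :=
    Finset.sum_nonneg fun i hi => by nlinarith [hneg' i hi, sq_nonneg (x i)]
  have hQw : (0:ℝ) ≤ ∑ i ∈ s, -(y i * y i * a i) :=
    Finset.sum_nonneg fun i hi => by nlinarith [hneg' i hi, sq_nonneg (y i)]
  have hsneg : ∀ f : Fin m → ℝ, ∑ i ∈ s, -(f i) = -∑ i ∈ s, f i := fun f => by
    simp [Finset.sum_neg_distrib]
  have hcs : (x i0 * y i0 * a i0)^2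
      ≤ (∑ i ∈ s, -(x i * x i * a i)) * (∑ i ∈ s, -(y i * y i * a i)) := by
    have hstep : x i0 * y i0 * a i0 = ∑ i ∈ s, -(x i * y i * a i) := by
      rw [hsneg]; linarith
    rw [hstep]
    calc (∑ i ∈ s, -(x i * y i * a i))^2
        = (∑ i ∈ s, (Real.sqrt (-a i) * x i) * (Real.sqrt (-a i) * y i))^2 := by
          congr 1
          refine Finset.sum_congr rfl fun i hi => ?_
          have h := Real.mul_self_sqrt (by linarith [hneg' i hi] : (0:ℝ) ≤ -a i)
          linear_combination (-(x i * y i)) * h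
      _ ≤ (∑ i ∈ s, (Real.sqrt (-a i) * x i)^2) * (∑ i ∈ s, (Real.sqrt (-a i) * y i)^2) :=
          Finset.sum_mul_sq_le_sq_mul_sq s _ _
      _ = _ := by
          congr 1 <;> refine Finset.sum_congr rfl fun i hi => ?_ <;>
          · have h := Real.mul_self_sqrt (by linarith [hneg' i hi] : (0:ℝ) ≤ -a i)
            ring_nf
            nlinarith [h]
  have hyQ : (∑ i ∈ s, -(y i * y i * a i)) < y i0 * y i0 * a i0 := by
    rw [hsneg]; linarith
  have hy2 : 0 < y i0 * y i0 := by nlinarith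
  have hmain : x i0 * x i0 * a i0 ≤ ∑ i ∈ s, -(x i * x i * a i) := by
    have h1 : (x i0 * y i0 * a i0)^2
        ≤ (∑ i ∈ s, -(x i * x i * a i)) * (y i0 * y i0 * a i0) :=
      le_trans hcs (mul_le_mul_of_nonneg_left hyQ.le hQx)
    have h2 : (x i0 * x i0 * a i0) * (y i0 * y i0 * a i0)
        ≤ (∑ i ∈ s, -(x i * x i * a i)) * (y i0 * y i0 * a i0) := by nlinarith
    exact le_of_mul_le_mul_right h2 (by positivity)
  have hBuu' : B u u = x i0 * x i0 * a i0 - ∑ i ∈ s, -(x i * x i * a i) := by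
    rw [hBuu, hsneg]; ring
  constructor
  · rw [hBuu']; linarith
  · intro h0
    rw [hBuu'] at h0
    have hQx0 : ∑ i ∈ s, -(x i * x i * a i) = 0 := by
      rcases eq_or_lt_of_le hQx with h | h
      · exact h.symm
      · exfalso
        have h1 : (x i0 * y i0 * a i0)^2
            < (∑ i ∈ s, -(x i * x i * a i)) * (y i0 * y i0 * a i0) :=
          lt_of_le_of_lt hcs (mul_lt_mul_of_pos_left hyQ h)
        nlinarith
    have hterms : ∀ j ∈ s, (0:ℝ) ≤ -(x j * x j * a j) := by
      intro j hj
      have h1 := hneg' j hj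
      nlinarith [sq_nonneg (x j)]
    have hxall : ∀ i ∈ s, x i = 0 := by
      intro i hi
      have hzero := (Finset.sum_eq_zero_iff_of_nonneg hterms).mp hQx0 i hi
      have h1 : x i * x i * a i = 0 := by linarith
      rcases mul_eq_zero.mp h1 with h2 | h2
      · exact mul_self_eq_zero.mp h2
      · exact absurd h2 (ne_of_lt (hneg' i hi))
    have hx0 : x i0 = 0 := by
      have h1 : x i0 * x i0 * a i0 = 0 := by rw [hQx0] at h0; linarith
      rcases mul_eq_zero.mp h1 with h2 | h2
      · exact mul_self_eq_zero.mp h2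
      · exact absurd h2 (ne_of_gt ha0)
    have hrepr : ∀ i, b.repr u i = 0 := by
      intro i
      by_cases h : i = i0
      · rw [h, ← congrFun hxd i0]; exact hx0
      · rw [← congrFun hxd i]
        exact hxall i (by rw [hsdef, Finset.mem_erase]; exact ⟨h, Finset.mem_univ i⟩)
    have : b.repr u = b.repr 0 := by
      rw [map_zero]; ext i; exact hrepr i
    exact b.repr.injective this



lemma cont_quad {V : Type*} [NormedAddCommGroup V] [NormedSpace ℝ V]
    [FiniteDimensional ℝ V] (B : LinearMap.BilinForm ℝ V) :
    Continuous fun u : V => B u u := by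
  let Bc : V →ₗ[ℝ] (V →L[ℝ] ℝ) :=
    (LinearMap.toContinuousLinearMap : (V →ₗ[ℝ] ℝ) ≃ₗ[ℝ] (V →L[ℝ] ℝ)).toLinearMap.comp B
  have hBc : Continuous Bc := Bc.continuous_of_finiteDimensional
  have : (fun u : V => B u u) = fun u => (Bc u) u := rfl
  rw [this]
  exact isBoundedBilinearMap_apply.continuous.comp (hBc.prodMk continuous_id)

lemma eps_bound {V : Type*} [NormedAddCommGroup V] [NormedSpace ℝ V]
    [FiniteDimensional ℝ V] (B : LinearMap.BilinForm ℝ V) (w : V)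
    (hnd : ∀ u : V, B u w = 0 → B u u ≤ 0 ∧ (B u u = 0 → u = 0)) :
    ∃ ε > 0, ∀ u : V, B u w = 0 → ε * ‖u‖^2 ≤ -B u u := by
  have hfw : Continuous fun v : V => B v w := by
    have h := (B.flip w).continuous_of_finiteDimensional
    refine h.congr fun v => ?_; simp
  have hWclosed : IsClosed {u : V | B u w = 0} := isClosed_eq hfw continuous_const
  have hSph : IsCompact ({u : V | B u w = 0} ∩ Metric.sphere 0 1) :=
    (isCompact_sphere (0:V) 1).inter_left hWclosed
  have hsmul : ∀ (c : ℝ) (u : V), B (c • u) (c • u) = c * c * B u u := by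
    intro c u; simp [map_smul, smul_eq_mul]; ring
  have hsmulw : ∀ (c : ℝ) (u : V), B u w = 0 → B (c • u) w = 0 := by
    intro c u h; simp [map_smul, smul_eq_mul, h]
  rcases ({u : V | B u w = 0} ∩ Metric.sphere 0 1).eq_empty_or_nonempty with hem | hne
  · refine ⟨1, one_pos, fun u huw => ?_⟩
    have hu0 : u = 0 := by
      by_contra h
      have hm : (‖u‖⁻¹ • u) ∈ ({u : V | B u w = 0} ∩ Metric.sphere 0 1) := by
        constructor
        · exact hsmulw _ u huw
        · simp [norm_smul, norm_inv, inv_mul_cancel₀ (norm_ne_zero_iff.mpr h)]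
      rw [hem] at hm; exact hm
    simp [hu0]
  · obtain ⟨u₀, hu₀mem, hmin⟩ := hSph.exists_isMinOn hne
      ((cont_quad B).neg.continuousOn)
    have hu₀w : B u₀ w = 0 := hu₀mem.1
    have hu₀n : ‖u₀‖ = 1 := by simpa using hu₀mem.2
    have hu₀ne : u₀ ≠ 0 := by intro h; rw [h] at hu₀n; simp at hu₀n
    have hε : 0 < -B u₀ u₀ := by
      rcases lt_or_eq_of_le (hnd u₀ hu₀w).1 with h | h
      · linarith
      · exact absurd ((hnd u₀ hu₀w).2 h) hu₀ne
    refine ⟨-B u₀ u₀, hε, fun u huw => ?_⟩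
    rcases eq_or_ne u 0 with rfl | hu
    · simp
    · have hn : ‖u‖ ≠ 0 := norm_ne_zero_iff.mpr hu
      have hmem : (‖u‖⁻¹ • u) ∈ ({u : V | B u w = 0} ∩ Metric.sphere 0 1) := by
        constructor
        · exact hsmulw _ u huw
        · simp [norm_smul, norm_inv, inv_mul_cancel₀ hn]
      have h1 := hmin hmem
      simp only [IsMinOn, Set.mem_setOf_eq] at h1
      have h2 : -B u₀ u₀ ≤ -B (‖u‖⁻¹ • u) (‖u‖⁻¹ • u) := h1
      rw [hsmul] at h2
      have hnpos : 0 < ‖u‖ := norm_pos_iff.mpr hu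
      have h3 : -B u₀ u₀ ≤ ‖u‖⁻¹ * ‖u‖⁻¹ * (-B u u) := by linarith
      calc (-B u₀ u₀) * ‖u‖^2 ≤ (‖u‖⁻¹ * ‖u‖⁻¹ * (-B u u)) * ‖u‖^2 :=
            mul_le_mul_of_nonneg_right h3 (sq_nonneg _)
        _ = -B u u := by
            rw [sq]
            have : ‖u‖⁻¹ * ‖u‖ = 1 := inv_mul_cancel₀ hn
            calc ‖u‖⁻¹ * ‖u‖⁻¹ * (-B u u) * (‖u‖ * ‖u‖)
                = (‖u‖⁻¹ * ‖u‖) * (‖u‖⁻¹ * ‖u‖) * (-B u u) := by ring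
              _ = -B u u := by rw [this]; ring


/-- A symmetric bilinear form on `V` has signature `(1, n-1)` if there is an orthogonal
basis indexed by `Fin n` with one vector of positive square (the one indexed by 0)
and all others of negative square. -/
def IsLorentzian {V : Type*} [AddCommGroup V] [Module ℝ V]
    (B : LinearMap.BilinForm ℝ V) (n : ℕ) : Prop :=
  ∃ b : Module.Basis (Fin n) ℝ V,
    (∀ i j, i ≠ j → B (b i) (b j) = 0) ∧
    (∀ i : Fin n, (i : ℕ) = 0 → 0 < B (b i) (b i)) ∧
    (∀ i : Fin n, (i : ℕ) ≠ 0 → B (b i) (b i) < 0)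

theorem compact_negative_slice (V : Type*) [NormedAddCommGroup V] [NormedSpace ℝ V]
    [FiniteDimensional ℝ V] (m : ℕ) (B : LinearMap.BilinForm ℝ V) (hsymm : B.IsSymm)
    (hB : IsLorentzian B m) (w : V) (hw : 0 < B w w) (K : ℤ) (hK : K < 0) :
    IsCompact {v : V | B v v = (K : ℝ) ∧ 0 ≤ B v w ∧ B v w ≤ 1} := by
  obtain ⟨b, horth, hpos, hneg⟩ := hB
  have hm : 0 < m := by
    by_contra h
    push_neg at h
    obtain rfl : m = 0 := Nat.le_zero.mp h
    have hw0 : w = 0 := by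
      have h2 := (b.sum_repr w).symm
      simpa using h2
    rw [hw0] at hw; simp at hw
  have hnd := negdef_orth hm B b horth hpos hneg w hw
  obtain ⟨ε, hε, hbound⟩ := eps_bound B w hnd
  have hq : Continuous fun u : V => B u u := cont_quad B
  have hfw : Continuous fun v : V => B v w := by
    have h := (B.flip w).continuous_of_finiteDimensional
    refine h.congr fun v => ?_; simp
  have hKneg : (K:ℝ) < 0 := by exact_mod_cast hK
  rw [Metric.isCompact_iff_isClosed_bounded]
  constructor
  · have h1 : IsClosed {v : V | B v v = (K:ℝ)} := isClosed_eq hq continuous_const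
    have h2 : IsClosed {v : V | 0 ≤ B v w} := isClosed_le continuous_const hfw
    have h3 : IsClosed {v : V | B v w ≤ 1} := isClosed_le hfw continuous_const
    exact h1.inter (h2.inter h3)
  · rw [isBounded_iff_forall_norm_le]
    refine ⟨(1 / B w w) * ‖w‖ + Real.sqrt ((1 / B w w - (K:ℝ)) / ε), ?_⟩
    rintro v ⟨hvv, hvw0, hvw1⟩
    obtain ⟨t, htd⟩ : ∃ t : ℝ, t = B v w / B w w := ⟨_, rfl⟩
    obtain ⟨u, hud⟩ : ∃ u : V, u = v - t • w := ⟨_, rfl⟩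
    have hBwne : B w w ≠ 0 := ne_of_gt hw
    have ht0 : 0 ≤ t := htd ▸ div_nonneg hvw0 hw.le
    have ht1 : t ≤ 1 / B w w := by rw [htd]; exact (div_le_div_iff_of_pos_right hw).mpr hvw1
    have htmul : t * B w w = B v w := by rw [htd, div_mul_cancel₀ _ hBwne]
    have huw : B u w = 0 := by
      rw [hud]
      simp only [map_sub, map_smul, LinearMap.sub_apply, LinearMap.smul_apply, smul_eq_mul]
      linarith [htmul]
    have hBwv : B w v = B v w := by
      have := hsymm.eq w v
      simpa using this
    have expand : B u u = B v v - t * B w v - t * B v w + t * t * B w w := by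
      rw [hud]
      simp only [map_sub, map_smul, LinearMap.sub_apply, LinearMap.smul_apply, smul_eq_mul]
      ring
    have hBuu : B u u = (K:ℝ) - t^2 * B w w := by
      rw [expand, hBwv, hvv, ← htmul]; ring
    have hBuuM : -B u u ≤ 1 / B w w - (K:ℝ) := by
      rw [hBuu]
      have h1 : t^2 * B w w ≤ (1 / B w w)^2 * B w w := by nlinarith [mul_le_mul ht1 ht1 ht0 (one_div_pos.mpr hw).le, hw]
      have h2 : (1 / B w w)^2 * B w w = 1 / B w w := by field_simp
      linarith
    have hu2 : ε * ‖u‖^2 ≤ 1 / B w w - (K:ℝ) := le_trans (hbound u huw) hBuuM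
    have hunorm : ‖u‖ ≤ Real.sqrt ((1 / B w w - (K:ℝ)) / ε) := by
      have h1 : ‖u‖^2 ≤ (1 / B w w - (K:ℝ)) / ε := by
        rw [le_div_iff₀ hε]; linarith
      calc ‖u‖ = Real.sqrt (‖u‖^2) := (Real.sqrt_sq (norm_nonneg u)).symm
        _ ≤ _ := Real.sqrt_le_sqrt h1
    have hveq : v = t • w + u := by rw [hud]; abel
    calc ‖v‖ = ‖t • w + u‖ := by rw [← hveq]
      _ ≤ ‖t • w‖ + ‖u‖ := norm_add_le _ _
      _ = t * ‖w‖ + ‖u‖ := by rw [norm_smul, Real.norm_of_nonneg ht0]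
      _ ≤ (1 / B w w) * ‖w‖ + Real.sqrt ((1 / B w w - (K:ℝ)) / ε) :=
          add_le_add (mul_le_mul_of_nonneg_right ht1 (norm_nonneg w)) hunorm
end

section
/- Let L be a free ℤ-module of finite rank with a symmetric bilinear form of signature (1, m−1) on L ⊗ ℝ, and fix w ∈ L ⊗ ℝ with w² > 0. For any B < 0 and ε > 0, the set of lattice vectors v ∈ L with B ≤ v² ≤ −1 and 0 ≤ v·w ≤ ε is finite. -/
open TensorProduct

section Aux

variable {V : Type*} [AddCommGroup V] [Module ℝ V] (β : LinearMap.BilinForm ℝ V)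

/-- Diagonal expansion of an orthogonal basis. -/
lemma lorentz_diag_expand {n : ℕ} (b : Module.Basis (Fin n) ℝ V)
    (horth : ∀ i j, i ≠ j → β (b i) (b j) = 0) (x y : V) :
    β x y = ∑ i, b.repr x i * (b.repr y i * β (b i) (b i)) := by
  have h1 : ∀ i, β (b i) y = b.repr y i * β (b i) (b i) := by
    intro i
    conv_lhs => rw [← b.sum_repr y]
    rw [map_sum, Finset.sum_eq_single i]
    · rw [map_smul, smul_eq_mul]
    · intro j _ hj
      simp [horth i j (Ne.symm hj)]
    · intro h; exact absurd (Finset.mem_univ i) h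
  conv_lhs => rw [← b.sum_repr x]
  rw [map_sum, LinearMap.sum_apply]
  exact Finset.sum_congr rfl fun i _ => by
    rw [map_smul, LinearMap.smul_apply, smul_eq_mul, h1]

/-- The form is negative definite on the orthogonal complement of a vector of
positive square. -/
lemma lorentz_negdef_orth {n : ℕ} (hn : 0 < n) (b : Module.Basis (Fin n) ℝ V)
    (horth : ∀ i j, i ≠ j → β (b i) (b j) = 0)
    (hpos : ∀ i : Fin n, (i : ℕ) = 0 → 0 < β (b i) (b i))
    (hneg : ∀ i : Fin n, (i : ℕ) ≠ 0 → β (b i) (b i) < 0)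
    (w : V) (hw : 0 < β w w) :
    ∀ x : V, β x w = 0 → x ≠ 0 → β x x < 0 := by
  intro x hxw hx
  by_contra hcon
  push_neg at hcon
  set i0 : Fin n := ⟨0, hn⟩ with hi0
  have hne : ∀ i : Fin n, i ≠ i0 → (i : ℕ) ≠ 0 := fun i h hv => h (Fin.ext hv)
  set s : Finset (Fin n) := Finset.univ.erase i0 with hs
  have hdpos : ∀ i ∈ s, 0 < -(β (b i) (b i)) := fun i hi => by
    have := hneg i (hne i (Finset.mem_erase.mp hi).1); linarith
  have expand : ∀ y z : V, β y z
      = b.repr y i0 * b.repr z i0 * β (b i0) (b i0)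
        - ∑ i ∈ s, (-(β (b i) (b i))) * (b.repr y i * b.repr z i) := by
    intro y z
    rw [lorentz_diag_expand β b horth y z,
      ← Finset.add_sum_erase Finset.univ _ (Finset.mem_univ i0), ← hs]
    have h2 : ∑ i ∈ s, b.repr y i * (b.repr z i * β (b i) (b i))
        = -∑ i ∈ s, (-(β (b i) (b i))) * (b.repr y i * b.repr z i) := by
      rw [← Finset.sum_neg_distrib]
      exact Finset.sum_congr rfl fun i _ => by ring
    rw [h2]; ring
  have hxx := expand x x
  have hww := expand w w
  have hxw2 := expand x w
  set d0 := β (b i0) (b i0) with hd0def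
  have hd0 : 0 < d0 := hpos i0 rfl
  set X0 := b.repr x i0 with hX0def
  set W0 := b.repr w i0 with hW0def
  set A := ∑ i ∈ s, (-(β (b i) (b i))) * (b.repr x i * b.repr x i) with hA
  set Wn := ∑ i ∈ s, (-(β (b i) (b i))) * (b.repr w i * b.repr w i) with hWn
  set Mx := ∑ i ∈ s, (-(β (b i) (b i))) * (b.repr x i * b.repr w i) with hMx
  have hA0 : 0 ≤ A := Finset.sum_nonneg fun i hi =>
    mul_nonneg (hdpos i hi).le (mul_self_nonneg _)
  have hWn0 : 0 ≤ Wn := Finset.sum_nonneg fun i hi =>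
    mul_nonneg (hdpos i hi).le (mul_self_nonneg _)
  -- Cauchy-Schwarz
  have hCS : Mx ^ 2 ≤ A * Wn := by
    have h := Finset.sum_mul_sq_le_sq_mul_sq s
      (fun i => Real.sqrt (-(β (b i) (b i))) * b.repr x i)
      (fun i => Real.sqrt (-(β (b i) (b i))) * b.repr w i)
    have e1 : ∑ i ∈ s, (Real.sqrt (-(β (b i) (b i))) * b.repr x i) *
        (Real.sqrt (-(β (b i) (b i))) * b.repr w i) = Mx := by
      rw [hMx]
      refine Finset.sum_congr rfl fun i hi => ?_
      rw [show (Real.sqrt (-(β (b i) (b i))) * b.repr x i) *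
          (Real.sqrt (-(β (b i) (b i))) * b.repr w i)
          = (Real.sqrt (-(β (b i) (b i))) * Real.sqrt (-(β (b i) (b i)))) *
            (b.repr x i * b.repr w i) by ring,
        Real.mul_self_sqrt (hdpos i hi).le]
    have e2 : ∑ i ∈ s, (Real.sqrt (-(β (b i) (b i))) * b.repr x i) ^ 2 = A := by
      rw [hA]
      refine Finset.sum_congr rfl fun i hi => ?_
      rw [mul_pow, Real.sq_sqrt (hdpos i hi).le]; ring
    have e3 : ∑ i ∈ s, (Real.sqrt (-(β (b i) (b i))) * b.repr w i) ^ 2 = Wn := by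
      rw [hWn]
      refine Finset.sum_congr rfl fun i hi => ?_
      rw [mul_pow, Real.sq_sqrt (hdpos i hi).le]; ring
    rw [e1, e2, e3] at h
    exact h
  have hA' : A ≤ X0 * X0 * d0 := by rw [hxx] at hcon; linarith
  have hW' : Wn < W0 * W0 * d0 := by rw [hww] at hw; linarith
  have hM : Mx = X0 * W0 * d0 := by rw [hxw2] at hxw; linarith
  rcases eq_or_ne X0 0 with hX0 | hX0
  · -- then A = 0 and all coordinates vanish, so x = 0
    have hAle : A ≤ 0 := by rw [hX0] at hA'; linarith
    have hAeq : A = 0 := le_antisymm hAle hA0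
    have hterm := (Finset.sum_eq_zero_iff_of_nonneg
      (fun i hi => mul_nonneg (hdpos i hi).le (mul_self_nonneg (b.repr x i)))).mp
      (hA ▸ hAeq)
    have hco : ∀ i : Fin n, b.repr x i = 0 := by
      intro i
      rcases eq_or_ne i i0 with rfl | hii
      · exact hX0
      · have hi : i ∈ s := Finset.mem_erase.mpr ⟨hii, Finset.mem_univ i⟩
        have := hterm i hi
        rcases mul_eq_zero.mp this with h | h
        · exact absurd h (hdpos i hi).ne'
        · exact mul_self_eq_zero.mp h
    apply hx
    have : b.repr x = 0 := by ext i; exact hco i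
    exact b.repr.injective (by rw [this, map_zero])
  · have hx2 : 0 < X0 * X0 * d0 := mul_pos (mul_self_pos.mpr hX0) hd0
    have h1 : (X0 * W0 * d0) ^ 2 ≤ A * Wn := hM ▸ hCS
    have h2 : A * Wn ≤ (X0 * X0 * d0) * Wn := mul_le_mul_of_nonneg_right hA' hWn0
    have h3 : (X0 * X0 * d0) * Wn < (X0 * X0 * d0) * (W0 * W0 * d0) :=
      mul_lt_mul_of_pos_left hW' hx2
    have h4 : (X0 * W0 * d0) ^ 2 = (X0 * X0 * d0) * (W0 * W0 * d0) := by ring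
    linarith

/-- The associated majorant is positive definite. -/
lemma lorentz_posdef_aux (hβ : ∀ x y : V, β x y = β y x) (w : V) (hw : 0 < β w w)
    (hno : ∀ x : V, β x w = 0 → x ≠ 0 → β x x < 0) :
    ∀ x : V, x ≠ 0 → β x x * β w w < 2 * (β x w) ^ 2 := by
  intro x hx
  have hWne : β w w ≠ 0 := ne_of_gt hw
  set a : ℝ := β x w / β w w with ha
  set y := x - a • w with hy
  have hyw : β y w = 0 := by
    rw [hy]
    simp only [map_sub, map_smul, LinearMap.sub_apply, LinearMap.smul_apply, smul_eq_mul]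
    rw [ha]; field_simp; ring
  have hxw : β x w = a * β w w := by rw [ha]; field_simp
  have hwy : β w y = 0 := (hβ w y).trans hyw
  have hxy : β x x = β y y + a * a * β w w := by
    have hx' : x = y + a • w := by rw [hy]; abel
    conv_lhs => rw [hx']
    simp only [map_add, map_smul, LinearMap.add_apply, LinearMap.smul_apply, smul_eq_mul]
    rw [hyw, hwy]; ring
  rcases eq_or_ne y 0 with h0 | h0
  · have hxa : x = a • w := by
      have h1 : x - a • w = 0 := by rw [← hy]; exact h0
      have := sub_eq_zero.mp h1; exact this
    have hane : a ≠ 0 := by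
      intro h; apply hx; rw [hxa, h, zero_smul]
    have h2 : β y y = 0 := by rw [h0]; simp
    rw [hxy, h2, hxw]
    have h3 : 0 < a * a := mul_self_pos.mpr hane
    nlinarith [mul_pos (mul_pos h3 hw) hw]
  · have hyy : β y y < 0 := hno y hyw h0
    rw [hxy, hxw]
    nlinarith [mul_neg_of_neg_of_pos hyy hw, mul_nonneg (mul_self_nonneg a) (sq_nonneg (β w w)),
      mul_pos hw hw, mul_self_nonneg a]

end Aux

set_option maxHeartbeats 2000000 in
theorem finitely_many_bounded_negative_lattice_vectors
    (L : Type*) [AddCommGroup L] [Module ℤ L] [Module.Free ℤ L] [Module.Finite ℤ L]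
    (B : LinearMap.BilinForm ℤ L) (hsymm : B.IsSymm) (m : ℕ)
    (hB : IsLorentzian (B.baseChange ℝ) m)
    (w : ℝ ⊗[ℤ] L) (hw : 0 < (B.baseChange ℝ) w w)
    (Bd : ℤ) (hBd : Bd < 0) (ε : ℝ) (hε : 0 < ε) :
    {v : L | Bd ≤ B v v ∧ B v v ≤ -1 ∧
        0 ≤ (B.baseChange ℝ) ((1 : ℝ) ⊗ₜ[ℤ] v) w ∧
        (B.baseChange ℝ) ((1 : ℝ) ⊗ₜ[ℤ] v) w ≤ ε}.Finite := by
  classical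
  set β := B.baseChange ℝ with hβdef
  obtain ⟨b, horth, hpos, hneg⟩ := hB
  have hβs : ∀ x y, β x y = β y x := fun x y => by
    simpa using LinearMap.isSymm_def.mp (LinearMap.BilinForm.IsSymm.baseChange ℝ (LinearMap.BilinForm.isSymm_iff.mp hsymm)) x y
  have hm : 0 < m := by
    rcases Nat.eq_zero_or_pos m with h | h
    · exfalso
      subst h
      have hw0 : w = 0 := by
        have := b.sum_repr w
        simpa using this.symm
      rw [hw0] at hw
      simp at hw
    · exact h
  have hno := lorentz_negdef_orth β hm b horth hpos hneg w hw
  have hQ := lorentz_posdef_aux β hβs w hw hno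
  set ι := Module.Free.ChooseBasisIndex ℤ L with hι
  set bL := Module.Free.chooseBasis ℤ L with hbL
  by_cases hemp : IsEmpty ι
  · haveI := hemp
    have hzero : ∀ v : L, v = 0 := fun v => by
      have h0 : bL.repr v = 0 := Finsupp.ext fun i => isEmptyElim i
      exact bL.repr.injective (by rw [h0, map_zero])
    exact Set.Finite.subset (Set.finite_singleton 0) fun v _ => hzero v
  haveI hne : Nonempty ι := not_isEmpty_iff.mp hemp
  set bR := bL.baseChange ℝ with hbR
  set f : (ι → ℝ) → ℝ := fun c =>
    2 * (∑ i, c i * β (bR i) w) ^ 2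
      - (∑ i, c i * ∑ j, c j * β (bR i) (bR j)) * β w w with hf
  have hfc : ∀ c, f c = 2 * (∑ i, c i * β (bR i) w) ^ 2
      - (∑ i, c i * ∑ j, c j * β (bR i) (bR j)) * β w w := fun _ => rfl
  have hfQ : ∀ c : ι → ℝ, f c = 2 * (β (∑ i, c i • bR i) w) ^ 2
      - β (∑ i, c i • bR i) (∑ i, c i • bR i) * β w w := by
    intro c
    have hswap : ∑ i, c i * ∑ j, c j * β (bR i) (bR j)
        = ∑ i, c i * ∑ j, c j * β (bR j) (bR i) := by
      simp_rw [Finset.mul_sum]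
      rw [Finset.sum_comm]
      exact Finset.sum_congr rfl fun i _ => Finset.sum_congr rfl fun j _ => by ring
    rw [hfc c]
    simp only [map_sum, LinearMap.sum_apply, map_smul, LinearMap.smul_apply, smul_eq_mul]
    rw [hswap]
  have hsum_ne : ∀ c : ι → ℝ, c ≠ 0 → (∑ i, c i • bR i) ≠ 0 := by
    intro c hc h
    apply hc
    have h1 : bR.equivFun.symm c = 0 := by rw [Module.Basis.equivFun_symm_apply]; exact h
    have h2 := congrArg bR.equivFun h1
    rwa [LinearEquiv.apply_symm_apply, map_zero] at h2
  have hfpos : ∀ c : ι → ℝ, c ≠ 0 → 0 < f c := by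
    intro c hc
    have hx := hQ _ (hsum_ne c hc)
    rw [hfQ c]
    linarith
  have hcont : Continuous f := by
    rw [hf]
    apply Continuous.sub
    · apply Continuous.mul continuous_const
      apply Continuous.pow
      exact continuous_finset_sum _ fun i _ => (continuous_apply i).mul continuous_const
    · apply Continuous.mul _ continuous_const
      exact continuous_finset_sum _ fun i _ => (continuous_apply i).mul
        (continuous_finset_sum _ fun j _ => (continuous_apply j).mul continuous_const)
  have hhom : ∀ (t : ℝ) (c : ι → ℝ), f (t • c) = t ^ 2 * f c := by
    intro t c
    rw [hfc, hfc]
    simp only [Pi.smul_apply, smul_eq_mul]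
    have e1 : ∑ i, t * c i * β (bR i) w = t * ∑ i, c i * β (bR i) w := by
      rw [Finset.mul_sum]; exact Finset.sum_congr rfl fun i _ => by ring
    have e2 : ∀ i, ∑ j, t * c j * β (bR i) (bR j) = t * ∑ j, c j * β (bR i) (bR j) :=
      fun i => by rw [Finset.mul_sum]; exact Finset.sum_congr rfl fun j _ => by ring
    have e3 : ∑ i, t * c i * ∑ j, t * c j * β (bR i) (bR j)
        = t ^ 2 * ∑ i, c i * ∑ j, c j * β (bR i) (bR j) := by
      rw [Finset.mul_sum]
      refine Finset.sum_congr rfl fun i _ => ?_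
      rw [e2 i]; ring
    rw [e1, e3]; ring
  haveI : Nontrivial (ι → ℝ) := by
    obtain ⟨i⟩ := hne
    exact ⟨0, (fun _ => 1), by
      intro h
      have := congrFun h i
      simp at this⟩
  obtain ⟨c₀, hc₀s, hc₀min⟩ := (isCompact_sphere (0 : ι → ℝ) 1).exists_isMinOn
    (NormedSpace.sphere_nonempty.mpr zero_le_one) hcont.continuousOn
  have hc₀norm : ‖c₀‖ = 1 := mem_sphere_zero_iff_norm.mp hc₀s
  have hδ : 0 < f c₀ := by
    apply hfpos
    intro h
    rw [h, norm_zero] at hc₀norm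
    exact zero_ne_one hc₀norm
  have hlb : ∀ c : ι → ℝ, f c₀ * ‖c‖ ^ 2 ≤ f c := by
    intro c
    rcases eq_or_ne c 0 with rfl | hc
    · have h0 : f 0 = 0 := by rw [hfc]; simp
      rw [h0, norm_zero]
      simp
    · have hnorm : ‖c‖ ≠ 0 := norm_ne_zero_iff.mpr hc
      have hu : (‖c‖⁻¹ • c) ∈ Metric.sphere (0 : ι → ℝ) 1 := by
        rw [mem_sphere_zero_iff_norm, norm_smul, norm_inv, norm_norm, inv_mul_cancel₀ hnorm]
      have h1 := hc₀min hu
      have h2 : f c = ‖c‖ ^ 2 * f (‖c‖⁻¹ • c) := by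
        rw [← hhom, smul_smul, mul_inv_cancel₀ hnorm, one_smul]
      rw [h2]
      calc f c₀ * ‖c‖ ^ 2 = ‖c‖ ^ 2 * f c₀ := mul_comm _ _
        _ ≤ ‖c‖ ^ 2 * f (‖c‖⁻¹ • c) := mul_le_mul_of_nonneg_left h1 (sq_nonneg _)
  set C : ℝ := 2 * ε ^ 2 - (Bd : ℝ) * β w w with hC
  set R : ℝ := Real.sqrt (C / f c₀) with hR
  set M : ℤ := ⌈R⌉ with hM
  -- every element of the set has coordinates bounded by M
  have hbound : ∀ v : L, v ∈ {v : L | Bd ≤ B v v ∧ B v v ≤ -1 ∧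
      0 ≤ β ((1 : ℝ) ⊗ₜ[ℤ] v) w ∧ β ((1 : ℝ) ⊗ₜ[ℤ] v) w ≤ ε} →
      ∀ i : ι, bL.repr v i ∈ Set.Icc (-M) M := by
    intro v hv i
    set cv : ι → ℝ := fun i => ((bL.repr v i : ℤ) : ℝ) with hcv
    have hx_eq : ∑ i, cv i • bR i = (1 : ℝ) ⊗ₜ[ℤ] v := by
      conv_rhs => rw [← bR.sum_repr ((1 : ℝ) ⊗ₜ[ℤ] v)]
      refine Finset.sum_congr rfl fun i _ => ?_
      congr 1
      rw [hbR, Module.Basis.baseChange_repr_tmul]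
      simp [hcv, zsmul_eq_mul]
    have hβvv : β ((1 : ℝ) ⊗ₜ[ℤ] v) ((1 : ℝ) ⊗ₜ[ℤ] v) = (B v v : ℝ) := by
      rw [hβdef, LinearMap.BilinForm.baseChange_tmul]
      simp
    have hfcv : f cv ≤ C := by
      rw [hfQ, hx_eq, hβvv, hC]
      have h5 : (β ((1 : ℝ) ⊗ₜ[ℤ] v) w) ^ 2 ≤ ε ^ 2 :=
        pow_le_pow_left₀ hv.2.2.1 hv.2.2.2 2
      have h6 : (Bd : ℝ) ≤ (B v v : ℝ) := by exact_mod_cast hv.1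
      nlinarith [mul_le_mul_of_nonneg_right h6 hw.le]
    have hnormle : ‖cv‖ ≤ R := by
      have h7 : f c₀ * ‖cv‖ ^ 2 ≤ C := le_trans (hlb cv) hfcv
      have h8 : ‖cv‖ ^ 2 ≤ C / f c₀ := by
        rw [le_div_iff₀ hδ]
        linarith
      calc ‖cv‖ = Real.sqrt (‖cv‖ ^ 2) := (Real.sqrt_sq (norm_nonneg _)).symm
        _ ≤ Real.sqrt (C / f c₀) := Real.sqrt_le_sqrt h8
    have hcoord : |((bL.repr v i : ℤ) : ℝ)| ≤ R := by
      have := norm_le_pi_norm cv i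
      rw [Real.norm_eq_abs] at this
      exact le_trans this hnormle
    have habs : |bL.repr v i| ≤ M := by
      have h9 : |((bL.repr v i : ℤ) : ℝ)| ≤ (M : ℝ) := le_trans hcoord (Int.le_ceil R)
      rw [← Int.cast_abs] at h9
      exact_mod_cast h9
    exact Set.mem_Icc.mpr (abs_le.mp habs)
  -- conclude finiteness via the injection into bounded integer tuples
  have hinj : Function.Injective (fun v : L => (bL.equivFun v : ι → ℤ)) :=
    fun a b h => bL.equivFun.injective h
  apply Set.Finite.of_finite_image (f := fun v : L => (bL.equivFun v : ι → ℤ))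
  · apply Set.Finite.subset (Set.Finite.pi fun _ : ι => Set.finite_Icc (-M) M)
    rintro _ ⟨v, hv, rfl⟩
    rw [Set.mem_univ_pi]
    intro i
    have := hbound v hv i
    simpa [Module.Basis.equivFun_apply] using this
  · exact hinj.injOn
end
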